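/- Let A ∈ [−1,1]^{n×n}. For any sequence of updates A₀ = A, A_{l+1} = A_l − t_l·1_{S_l}1_{T_l}ᵀ with |t_l| = ε'/3 for a fixed ε' > 0, the number of steps l for which σ_l Σ_{(i,k) ∈ S_l×T_l} (A_l)_{i,k} ≥ (2/3) ε' n² (where σ_l = sign(t_l)) is at most 3/ε'², since each such step decreases ‖A_l‖_F² by at least (ε'²/3)n² and ‖A₀‖_F² ≤ n². -/

import Mathlib

/-- For the iterative cut-decomposition process `A_{l+1} = A_l − t_l·1_{S_l}1_{T_l}ᵀ`
with `|t_l| = ε'/3`, starting from a matrix with entries in `[−1,1]`: each step at which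
`σ_l Σ_{S_l×T_l}(A_l)_{i,k} ≥ (2/3)ε'n²` decreases the squared Frobenius norm by at
least `(ε'²/3)n²`; hence the number of such steps (if every step is such) is at most
`3/ε'²`. -/
theorem stmt_19 (n : ℕ) (hn : 0 < n) (ε' : ℝ) (hε' : 0 < ε')
    (A : ℕ → Matrix (Fin n) (Fin n) ℝ)
    (hA0 : ∀ i k, A 0 i k ∈ Set.Icc (-1 : ℝ) 1)
    (S T : ℕ → Finset (Fin n)) (σ : ℕ → ℝ) (hσ : ∀ l, σ l = 1 ∨ σ l = -1)
    (t : ℕ → ℝ) (ht : ∀ l, t l = σ l * ε' / 3)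
    (hstep : ∀ l i k, A (l + 1) i k =
      A l i k - if i ∈ S l ∧ k ∈ T l then t l else 0) :
    (∀ l, σ l * (∑ i ∈ S l, ∑ k ∈ T l, A l i k) ≥ 2 / 3 * ε' * (n : ℝ) ^ 2 →
      ∑ i, ∑ k, (A (l + 1) i k) ^ 2 ≤
        (∑ i, ∑ k, (A l i k) ^ 2) - ε' ^ 2 / 3 * (n : ℝ) ^ 2) ∧
    ∀ L : ℕ,
      (∀ l < L, σ l * (∑ i ∈ S l, ∑ k ∈ T l, A l i k) ≥ 2 / 3 * ε' * (n : ℝ) ^ 2) →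
      (L : ℝ) ≤ 3 / ε' ^ 2 := by
  have h1 : ∀ (l : ℕ) (f : Fin n → Fin n → ℝ),
      (∑ i, ∑ k, (if i ∈ S l ∧ k ∈ T l then f i k else 0)) =
      ∑ i ∈ S l, ∑ k ∈ T l, f i k := by
    intro l f
    calc ∑ i, ∑ k, (if i ∈ S l ∧ k ∈ T l then f i k else 0)
        = ∑ i, (if i ∈ S l then ∑ k ∈ T l, f i k else 0) := by
          refine Finset.sum_congr rfl fun i _ => ?_
          by_cases hi : i ∈ S l
          · simp only [hi, true_and, if_true]
            rw [Finset.sum_ite_mem, Finset.univ_inter]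
          · simp [hi]
      _ = ∑ i ∈ S l, ∑ k ∈ T l, f i k := by
          rw [Finset.sum_ite_mem, Finset.univ_inter]
  have hexp : ∀ l, (∑ i, ∑ k, (A (l + 1) i k) ^ 2) =
      (∑ i, ∑ k, (A l i k) ^ 2)
        - 2 * t l * (∑ i ∈ S l, ∑ k ∈ T l, A l i k)
        + ((S l).card : ℝ) * ((T l).card : ℝ) * (t l) ^ 2 := by
    intro l
    have hterm : ∀ i k : Fin n,
        (A l i k - if i ∈ S l ∧ k ∈ T l then t l else 0) ^ 2 =
        (A l i k) ^ 2 - 2 * t l * (if i ∈ S l ∧ k ∈ T l then A l i k else 0)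
          + (if i ∈ S l ∧ k ∈ T l then t l ^ 2 else 0) := by
      intro i k; split_ifs <;> ring
    simp only [hstep, hterm, Finset.sum_add_distrib, Finset.sum_sub_distrib,
      ← Finset.mul_sum, h1]
    simp [Finset.sum_const, nsmul_eq_mul]
    rw [h1 l (A l)]
    ring
  have hdec : ∀ l, σ l * (∑ i ∈ S l, ∑ k ∈ T l, A l i k) ≥ 2 / 3 * ε' * (n : ℝ) ^ 2 →
      ∑ i, ∑ k, (A (l + 1) i k) ^ 2 ≤
        (∑ i, ∑ k, (A l i k) ^ 2) - ε' ^ 2 / 3 * (n : ℝ) ^ 2 := by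
    intro l hl
    have hcS : ((S l).card : ℝ) ≤ n := by
      exact_mod_cast (Finset.card_le_card (Finset.subset_univ _)).trans (by simp)
    have hcT : ((T l).card : ℝ) ≤ n := by
      exact_mod_cast (Finset.card_le_card (Finset.subset_univ _)).trans (by simp)
    have hcS0 : (0:ℝ) ≤ (S l).card := by positivity
    have hcT0 : (0:ℝ) ≤ (T l).card := by positivity
    have hσ2 : σ l ^ 2 = 1 := by rcases hσ l with h | h <;> simp [h]
    have ht2 : (t l) ^ 2 = ε' ^ 2 / 9 := by rw [ht l]; field_simp; nlinarith [hσ2]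
    have h2t : 2 * t l * (∑ i ∈ S l, ∑ k ∈ T l, A l i k) ≥ 4 / 9 * ε' ^ 2 * (n:ℝ)^2 := by
      rw [ht l]
      have := mul_le_mul_of_nonneg_left hl (le_of_lt (by positivity : (0:ℝ) < 2 * ε' / 3))
      calc 2 * (σ l * ε' / 3) * (∑ i ∈ S l, ∑ k ∈ T l, A l i k)
          = 2 * ε' / 3 * (σ l * (∑ i ∈ S l, ∑ k ∈ T l, A l i k)) := by ring
        _ ≥ 2 * ε' / 3 * (2 / 3 * ε' * (n : ℝ) ^ 2) := this
        _ = 4 / 9 * ε' ^ 2 * (n:ℝ)^2 := by ring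
    have hn2 : (0:ℝ) ≤ (n:ℝ)^2 := by positivity
    rw [hexp l, ht2]
    have : ((S l).card : ℝ) * ((T l).card : ℝ) ≤ (n:ℝ)^2 := by nlinarith
    nlinarith [this]
  refine ⟨hdec, ?_⟩
  intro L hL
  have hkey : ∀ M ≤ L, (∑ i, ∑ k, (A M i k) ^ 2) ≤ (n:ℝ)^2 - M * (ε'^2/3 * (n:ℝ)^2) := by
    intro M
    induction M with
    | zero =>
      intro _
      simp only [Nat.cast_zero, zero_mul, sub_zero]
      have hle : ∀ i k : Fin n, (A 0 i k)^2 ≤ 1 := by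
        intro i k
        have := hA0 i k
        rw [Set.mem_Icc] at this
        nlinarith [this.1, this.2]
      calc ∑ i, ∑ k, (A 0 i k)^2 ≤ ∑ _i : Fin n, ∑ _k : Fin n, (1:ℝ) := by
            refine Finset.sum_le_sum fun i _ => Finset.sum_le_sum fun k _ => hle i k
        _ = (n:ℝ)^2 := by simp; ring
    | succ M ih =>
      intro hML
      have hM : M < L := Nat.lt_of_succ_le hML
      have h1 := hdec M (hL M hM)
      have h2 := ih (le_of_lt hM)
      push_cast
      linarith
  have h0 : (0:ℝ) ≤ ∑ i, ∑ k, (A L i k) ^ 2 := by positivity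
  have hfin := hkey L le_rfl
  have hn2 : (0:ℝ) < (n:ℝ)^2 := by positivity
  have hε2 : (0:ℝ) < ε'^2 := by positivity
  rw [le_div_iff₀ hε2]
  nlinarith [h0, hfin, hn2, hε2]
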